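/- In the icosahedron thickening setting: if G is a thickening of (G_0, ∅) with weights w_i = |X_{v_i}| and no brace of G is Tihany, then for the brace {x_1, x_3} (with x_i ∈ X_{v_i}) one has w_4 + w_5 + w_6 + w_7 + w_8 + w_9 + w_{10} + w_{11} ≤ 2(w_0 + w_1 + w_2 + w_3 − 2). -/

import Mathlib

open SimpleGraph

/-- The edges of the icosahedron on vertices `v_0, …, v_11`. -/
def icoEdges : List (Fin 12 × Fin 12) :=
  [(1,2),(2,3),(3,4),(4,5),(5,6),(6,7),(7,8),(8,9),(9,10),(10,1),
   (1,3),(2,4),(3,5),(4,6),(5,7),(6,8),(7,9),(8,10),(9,1),(10,2),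
   (0,1),(0,3),(0,5),(0,7),(0,9),
   (11,2),(11,4),(11,6),(11,8),(11,10)]

/-- The icosahedron graph. -/
def icosahedron : SimpleGraph (Fin 12) where
  Adj a b := a ≠ b ∧ ((a, b) ∈ icoEdges ∨ (b, a) ∈ icoEdges)
  symm := ⟨fun _ _ h => ⟨h.1.symm, h.2.symm⟩⟩
  loopless := ⟨fun _ h => h.1 rfl⟩

instance icoDec : DecidableRel icosahedron.Adj :=
  fun a b => decidable_of_iff (a ≠ b ∧ ((a, b) ∈ icoEdges ∨ (b, a) ∈ icoEdges)) Iff.rfl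

lemma ico_common : ∀ i : Fin 12, (i = 1 ∨ icosahedron.Adj i 1) →
    (i = 3 ∨ icosahedron.Adj i 3) → (i = 0 ∨ i = 1 ∨ i = 2 ∨ i = 3) := by decide

lemma ico_disj : ∀ i j : Fin 12, i ∈ ({4,5,6,7,8,9,10,11} : Finset (Fin 12)) →
    (j = 0 ∨ j = 1 ∨ j = 2 ∨ j = 3) → i ≠ j := by decide

lemma ico13 : icosahedron.Adj 1 3 := by decide

lemma ico_alpha : ∀ a b c d : Fin 12, ¬(a ≠ b ∧ a ≠ c ∧ a ≠ d ∧ b ≠ c ∧ b ≠ d ∧ c ≠ d ∧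
    ¬icosahedron.Adj a b ∧ ¬icosahedron.Adj a c ∧ ¬icosahedron.Adj a d ∧
    ¬icosahedron.Adj b c ∧ ¬icosahedron.Adj b d ∧ ¬icosahedron.Adj c d) := by decide

/-- In a thickening `G` of the icosahedron with `χ(G) > ω(G)` and no Tihany brace, the
weights satisfy `w_4 + ⋯ + w_11 ≤ 2 (w_0 + w_1 + w_2 + w_3 - 2)` (coming from the brace
`{x_1, x_3}`). -/
theorem stmt11 {V : Type*} [Fintype V] [DecidableEq V] (G : SimpleGraph V)
    (f : V → Fin 12) (hsurj : Function.Surjective f)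
    (hadj : ∀ u v : V, G.Adj u v ↔ u ≠ v ∧ (f u = f v ∨ icosahedron.Adj (f u) (f v)))
    (hχω : (G.cliqueNum : ℕ∞) < G.chromaticNumber)
    (hnoT : ∀ x y : V, G.Adj x y →
      ¬ (G.chromaticNumber - 1 ≤ (G.induce (({x, y} : Set V)ᶜ)).chromaticNumber))
    (w : Fin 12 → ℕ)
    (hw : ∀ i, w i = (Finset.univ.filter (fun v : V => f v = i)).card)
    (x₁ x₃ : V) (hx₁ : f x₁ = 1) (hx₃ : f x₃ = 3) :
    w 4 + w 5 + w 6 + w 7 + w 8 + w 9 + w 10 + w 11 ≤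
      2 * (w 0 + w 1 + w 2 + w 3 - 2) := by
  classical
  have hne13 : x₁ ≠ x₃ := by
    intro h; rw [h, hx₃] at hx₁; exact absurd hx₁ (by decide)
  have h13 : G.Adj x₁ x₃ := (hadj x₁ x₃).2 ⟨hne13, Or.inr (by rw [hx₁, hx₃]; exact ico13)⟩
  set sC : Set V := ({x₁, x₃} : Set V)ᶜ with hsC
  have hmem_sC : ∀ v : V, v ∈ sC ↔ v ≠ x₁ ∧ v ≠ x₃ := by
    intro v; simp [hsC]
  -- chromatic numbers
  have hχtop : G.chromaticNumber ≠ ⊤ := by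
    have := G.colorable_of_fintype.chromaticNumber_le
    exact (this.trans_lt (WithTop.coe_lt_top _)).ne
  set n := G.chromaticNumber.toNat with hn
  have hχn : G.chromaticNumber = (n : ℕ∞) := (ENat.coe_toNat hχtop).symm
  have hT := hnoT x₁ x₃ h13
  have hlt : (G.induce sC).chromaticNumber < G.chromaticNumber - 1 := not_le.mp hT
  rw [hχn, ← Nat.cast_one, ← ENat.coe_sub] at hlt
  have hχ'top : (G.induce sC).chromaticNumber ≠ ⊤ := hlt.ne_top
  set m := (G.induce sC).chromaticNumber.toNat with hm
  have hχ'm : (G.induce sC).chromaticNumber = (m : ℕ∞) := (ENat.coe_toNat hχ'top).symm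
  rw [hχ'm, Nat.cast_lt] at hlt
  have hm2 : m + 2 ≤ n := by omega
  obtain ⟨ψ⟩ : (G.induce sC).Colorable m := by
    have := (G.induce sC).colorable_chromaticNumber_of_fintype
    rwa [← hm] at this
  -- every color class meets C
  have hwit : ∀ c : Fin m, ∃ v : V, ∃ hv : v ∈ sC, ψ ⟨v, hv⟩ = c ∧
      (f v = 0 ∨ f v = 1 ∨ f v = 2 ∨ f v = 3) := by
    intro c
    by_contra hcon
    push_neg at hcon
    have hcol : G.Colorable (m + 1) := by
      set col : V → Fin (m + 1) := fun v =>
        if hv : v ∈ sC then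
          (if ψ ⟨v, hv⟩ = c ∧ G.Adj v x₁ then Fin.last m else (ψ ⟨v, hv⟩).castSucc)
        else (if v = x₁ then c.castSucc else Fin.last m) with hcoldef
      have hcommon : ∀ z : V, z ∈ sC → G.Adj z x₁ → G.Adj z x₃ →
          (f z = 0 ∨ f z = 1 ∨ f z = 2 ∨ f z = 3) := by
        intro z hz h1 h3
        have e1 := ((hadj z x₁).1 h1).2
        have e3 := ((hadj z x₃).1 h3).2
        rw [hx₁] at e1
        rw [hx₃] at e3
        refine ico_common (f z) ?_ ?_
        · rcases e1 with h | h
          · exact Or.inl h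
          · exact Or.inr h
        · rcases e3 with h | h
          · exact Or.inl h
          · exact Or.inr h
      have hnotmem : ∀ z : V, z ∉ sC → z = x₁ ∨ z = x₃ := by
        intro z hz
        by_contra hc
        push_neg at hc
        exact hz ((hmem_sC z).2 hc)
      have hx1not : x₁ ∉ sC := by simp [hsC]
      have hx3not : x₃ ∉ sC := by simp [hsC]
      have colx1 : col x₁ = c.castSucc := by
        rw [hcoldef]; simp [dif_neg hx1not]
      have colx3 : col x₃ = Fin.last m := by
        rw [hcoldef]; simp [dif_neg hx3not, if_neg (Ne.symm hne13)]
      have key : ∀ a b : V, a ∈ sC → b ∉ sC → G.Adj a b → col a = col b → False := by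
        intro a b ha hb hab heq
        rcases hnotmem b hb with hbx | hbx
        · rw [hbx, colx1] at heq
          rw [hbx] at hab
          rw [hcoldef] at heq
          simp only [dif_pos ha] at heq
          split_ifs at heq with h1
          · exact (Fin.castSucc_lt_last c).ne' heq
          · rw [Fin.castSucc_inj] at heq
            exact h1 ⟨heq, hab⟩
        · rw [hbx, colx3] at heq
          rw [hbx] at hab
          rw [hcoldef] at heq
          simp only [dif_pos ha] at heq
          split_ifs at heq with h1
          · rcases hcon a ha h1.1 with ⟨e0, e1, e2, e3⟩
            rcases hcommon a ha h1.2 hab with h | h | h | h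
            · exact e0 h
            · exact e1 h
            · exact e2 h
            · exact e3 h
          · exact (Fin.castSucc_lt_last _).ne heq
      have valid : ∀ {a b : V}, G.Adj a b → col a ≠ col b := by
        intro a b hab heq
        by_cases ha : a ∈ sC <;> by_cases hb : b ∈ sC
        · rw [hcoldef] at heq
          simp only [dif_pos ha, dif_pos hb] at heq
          split_ifs at heq with h1 h2 h2
          · exact ψ.valid (by exact hab) (h1.1.trans h2.1.symm)
          · exact (Fin.castSucc_lt_last _).ne' heq
          · exact (Fin.castSucc_lt_last _).ne heq
          · rw [Fin.castSucc_inj] at heq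
            exact ψ.valid (by exact hab) heq
        · exact key a b ha hb hab heq
        · exact key b a hb ha hab.symm heq.symm
        · rcases hnotmem a ha with hax | hax <;> rcases hnotmem b hb with hbx | hbx
          · exact hab.ne (hax.trans hbx.symm)
          · rw [hax, hbx, colx1, colx3] at heq
            exact (Fin.castSucc_lt_last c).ne heq
          · rw [hax, hbx, colx3, colx1] at heq
            exact (Fin.castSucc_lt_last c).ne' heq
          · exact hab.ne (hax.trans hbx.symm)
      exact ⟨SimpleGraph.Coloring.mk col valid⟩
    have hle := hcol.chromaticNumber_le
    rw [hχn, Nat.cast_le] at hle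
    omega
  choose uu huu_mem huu_col huu_f using hwit
  -- pairwise facts for same-colored vertices
  have hpair : ∀ (a b : V) (ha : a ∈ sC) (hb : b ∈ sC), a ≠ b →
      ψ ⟨a, ha⟩ = ψ ⟨b, hb⟩ → f a ≠ f b ∧ ¬ icosahedron.Adj (f a) (f b) := by
    intro a b ha hb hne hcol
    have hnadj : ¬ G.Adj a b := fun h => ψ.valid (by exact h) hcol
    rw [hadj] at hnadj
    push_neg at hnadj
    exact hnadj hne
  -- counting
  have hsplit : ∀ t : Finset (Fin 12),
      (Finset.univ.filter (fun v : V => f v ∈ t)).card = ∑ i ∈ t, w i := by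
    intro t
    rw [Finset.card_eq_sum_card_fiberwise (f := f) (s := Finset.univ.filter (fun v : V => f v ∈ t)) (t := t)
      (fun x hx => (Finset.mem_filter.1 hx).2)]
    refine Finset.sum_congr rfl fun i hi => ?_
    rw [hw]
    congr 1
    ext v
    simp only [Finset.mem_filter, Finset.mem_univ, true_and]
    exact ⟨fun h => h.2, fun h => ⟨h ▸ hi, h⟩⟩
  set t8 : Finset (Fin 12) := {4,5,6,7,8,9,10,11} with ht8
  set t03 : Finset (Fin 12) := {0,1,2,3} with ht03
  set T : Finset V := Finset.univ.filter (fun v => f v ∈ t8) with hTdef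
  set base : Finset V := Finset.univ.filter (fun v => f v ∈ t03) with hbasedef
  have hTcard : T.card = w 4 + w 5 + w 6 + w 7 + w 8 + w 9 + w 10 + w 11 := by
    rw [hTdef, hsplit, ht8]
    simp [Finset.sum_insert, Finset.mem_insert]
    ring
  have hbasecard : base.card = w 0 + w 1 + w 2 + w 3 := by
    rw [hbasedef, hsplit, ht03]
    simp [Finset.sum_insert, Finset.mem_insert]
    ring
  have hx1base : x₁ ∈ base := by
    rw [hbasedef, Finset.mem_filter]
    exact ⟨Finset.mem_univ _, by rw [hx₁, ht03]; decide⟩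
  have hx3base : x₃ ∈ base.erase x₁ := by
    refine Finset.mem_erase.2 ⟨hne13.symm, ?_⟩
    rw [hbasedef, Finset.mem_filter]
    exact ⟨Finset.mem_univ _, by rw [hx₃, ht03]; decide⟩
  set C' : Finset V := (base.erase x₁).erase x₃ with hC'def
  have hC'card : C'.card = base.card - 1 - 1 := by
    rw [hC'def, Finset.card_erase_of_mem hx3base, Finset.card_erase_of_mem hx1base]
  have hmC : m ≤ C'.card := by
    have hmaps : ∀ c ∈ (Finset.univ : Finset (Fin m)), uu c ∈ C' := by
      intro c _
      have hmem := (hmem_sC (uu c)).1 (huu_mem c)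
      refine Finset.mem_erase.2 ⟨hmem.2, Finset.mem_erase.2 ⟨hmem.1, ?_⟩⟩
      rw [hbasedef, Finset.mem_filter]
      refine ⟨Finset.mem_univ _, ?_⟩
      rw [ht03]
      rcases huu_f c with h | h | h | h <;> rw [h] <;> decide
    have hinj : Set.InjOn uu (Finset.univ : Finset (Fin m)) := by
      intro c _ c' _ h
      have hsub : (⟨uu c, huu_mem c⟩ : sC) = ⟨uu c', huu_mem c'⟩ := Subtype.ext h
      rw [← huu_col c, ← huu_col c', hsub]
    calc m = (Finset.univ : Finset (Fin m)).card := by simp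
      _ ≤ C'.card := Finset.card_le_card_of_injOn uu hmaps hinj
  have hTs : ∀ v, v ∈ T → v ∈ sC := by
    intro v hv
    rw [hTdef, Finset.mem_filter] at hv
    refine (hmem_sC v).2 ⟨?_, ?_⟩
    · rintro rfl
      rw [hx₁, ht8] at hv
      exact absurd hv.2 (by decide)
    · rintro rfl
      rw [hx₃, ht8] at hv
      exact absurd hv.2 (by decide)
  have hT2m : T.card ≤ 2 * m := by
    rcases Nat.eq_zero_or_pos m with hm0 | hm0
    · have hTe : T = ∅ := by
        rw [Finset.eq_empty_iff_forall_notMem]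
        intro v hv
        exact absurd (ψ ⟨v, hTs v hv⟩).isLt (by omega)
      simp [hTe]
    · haveI : NeZero m := ⟨hm0.ne'⟩
      set g : V → Fin m := fun v => if hv : v ∈ sC then ψ ⟨v, hv⟩ else 0 with hg
      have hfib : ∀ c0 : Fin m, (T.filter (fun v => g v = c0)).card ≤ 2 := by
        intro c0
        by_contra hgt
        push_neg at hgt
        obtain ⟨F, hFsub, hFcard⟩ := Finset.exists_subset_card_eq hgt
        obtain ⟨a, b, c', hab, hac, hbc, rfl⟩ := Finset.card_eq_three.1 hFcard
        have hprop : ∀ x : V, x ∈ ({a, b, c'} : Finset V) →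
            ∃ hx : x ∈ sC, ψ ⟨x, hx⟩ = c0 ∧ f x ∈ t8 := by
          intro x hx
          have hx' := hFsub hx
          rw [Finset.mem_filter] at hx'
          have hxT := hx'.1
          have hxs := hTs x hxT
          refine ⟨hxs, ?_, ?_⟩
          · have := hx'.2
            rw [hg] at this
            simpa [dif_pos hxs] using this
          · rw [hTdef, Finset.mem_filter] at hxT
            exact hxT.2
        obtain ⟨has, hacol, haf⟩ := hprop a (by simp)
        obtain ⟨hbs, hbcol, hbf⟩ := hprop b (by simp)
        obtain ⟨hcs, hccol, hcf⟩ := hprop c' (by simp)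
        set d := uu c0 with hd
        have hds : d ∈ sC := huu_mem c0
        have hdcol : ψ ⟨d, hds⟩ = c0 := huu_col c0
        have hdf := huu_f c0
        have hfad : f a ≠ f d := ico_disj _ _ (ht8 ▸ haf) hdf
        have hfbd : f b ≠ f d := ico_disj _ _ (ht8 ▸ hbf) hdf
        have hfcd : f c' ≠ f d := ico_disj _ _ (ht8 ▸ hcf) hdf
        have hvad : a ≠ d := fun h => hfad (by rw [h])
        have hvbd : b ≠ d := fun h => hfbd (by rw [h])
        have hvcd : c' ≠ d := fun h => hfcd (by rw [h])
        have pab := hpair a b has hbs hab (hacol.trans hbcol.symm)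
        have pac := hpair a c' has hcs hac (hacol.trans hccol.symm)
        have pbc := hpair b c' hbs hcs hbc (hbcol.trans hccol.symm)
        have pad := hpair a d has hds hvad (hacol.trans hdcol.symm)
        have pbd := hpair b d hbs hds hvbd (hbcol.trans hdcol.symm)
        have pcd := hpair c' d hcs hds hvcd (hccol.trans hdcol.symm)
        exact ico_alpha (f a) (f b) (f c') (f d)
          ⟨pab.1, pac.1, pad.1, pbc.1, pbd.1, pcd.1,
           pab.2, pac.2, pad.2, pbc.2, pbd.2, pcd.2⟩
      rw [Finset.card_eq_sum_card_fiberwise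
        (f := g) (t := Finset.univ) (fun x _ => Finset.mem_univ _)]
      calc ∑ c0 : Fin m, ((T.filter (fun v => g v = c0)).card)
          ≤ ∑ _c0 : Fin m, 2 := Finset.sum_le_sum (fun c0 _ => hfib c0)
        _ = 2 * m := by simp [mul_comm]
  omega
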